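/- Let b be a positive real, b_0 > 0, and b_1, ..., b_n ∈ (0, b], and let p ∈ (0,1). Then ∑_{i=1}^n b_i / (b_0 + ∑_{j=1}^{i-1} b_j)^p ≤ b/b_0^p + (2/(1-p)) · (b_0 + ∑_{i=1}^n b_i)^{1-p}. -/
import Mathlib

open Finset

lemma bern (t q : ℝ) (ht : 0 ≤ t) (hq0 : 0 ≤ q) (hq1 : q ≤ 1) :
    t ^ q ≤ q * t + (1 - q) := by
  have h := Real.geom_mean_le_arith_mean2_weighted (w₁ := q) (w₂ := 1 - q) (p₁ := t) (p₂ := 1) hq0 (by linarith) ht zero_le_one (by ring)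
  rw [Real.one_rpow, mul_one, mul_one] at h
  linarith

lemma key (x c B p : ℝ) (hx : 0 < x) (hc : 0 < c) (hcB : c ≤ B) (hp : 0 < p) (hp1 : p < 1) :
    c / x ^ p ≤ B * (x ^ (-p) - (x + c) ^ (-p)) +
      (1 / (1 - p)) * ((x + c) ^ (1 - p) - x ^ (1 - p)) := by
  have hy : 0 < x + c := by linarith
  have hq : (0:ℝ) < 1 - p := by linarith
  have ht : 0 < x / (x + c) := div_pos hx hy
  have hb := bern (x / (x + c)) (1 - p) ht.le hq.le (by linarith)
  -- (x/(x+c))^(1-p) = x^(1-p) / (x+c)^(1-p)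
  have hdr : (x / (x + c)) ^ (1 - p) = x ^ (1 - p) / (x + c) ^ (1 - p) :=
    Real.div_rpow hx.le hy.le (1 - p)
  have hyp : (0:ℝ) < (x + c) ^ (1 - p) := Real.rpow_pos_of_pos hy _
  have hxp : (0:ℝ) < x ^ p := Real.rpow_pos_of_pos hx _
  have hypp : (0:ℝ) < (x + c) ^ p := Real.rpow_pos_of_pos hy _
  -- first part: c/(x+c)^p ≤ (1/(1-p)) * ((x+c)^(1-p) - x^(1-p))
  have h1 : c / (x + c) ^ p ≤ (1 / (1 - p)) * ((x + c) ^ (1 - p) - x ^ (1 - p)) := by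
    rw [hdr] at hb
    have hmul : x ^ (1 - p) ≤ ((1 - p) * (x / (x + c)) + p) * (x + c) ^ (1 - p) := by
      have := mul_le_mul_of_nonneg_right hb hyp.le
      rw [div_mul_cancel₀] at this
      · linarith [this]
      · exact hyp.ne'
    have hsplit : ((1 - p) * (x / (x + c)) + p) * (x + c) ^ (1 - p)
        = (x + c) ^ (1 - p) - (1 - p) * c / (x + c) ^ p := by
      have h1p : (x + c) ^ (1 - p) = (x + c) / (x + c) ^ p := by
        rw [Real.rpow_sub hy, Real.rpow_one]
      rw [h1p]
      field_simp
      ring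
    rw [hsplit] at hmul
    have e : (1 - p) * c / (x + c) ^ p = (1 - p) * (c / (x + c) ^ p) := by ring
    rw [e] at hmul
    have e2 : 1 / (1 - p) * ((x + c) ^ (1 - p) - x ^ (1 - p))
        = ((x + c) ^ (1 - p) - x ^ (1 - p)) / (1 - p) := by ring
    rw [e2, le_div_iff₀ hq]
    linarith
  -- second part
  have h2 : c / x ^ p - c / (x + c) ^ p ≤ B * (x ^ (-p) - (x + c) ^ (-p)) := by
    have hinv : x ^ (-p) = 1 / x ^ p := by rw [Real.rpow_neg hx.le, one_div]
    have hinv2 : (x + c) ^ (-p) = 1 / (x + c) ^ p := by rw [Real.rpow_neg hy.le, one_div]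
    rw [hinv, hinv2]
    have hle : x ^ p ≤ (x + c) ^ p := Real.rpow_le_rpow hx.le (by linarith) hp.le
    have hnn : 0 ≤ 1 / x ^ p - 1 / (x + c) ^ p := by
      have : 1 / (x + c) ^ p ≤ 1 / x ^ p := one_div_le_one_div_of_le hxp hle
      linarith
    have : c * (1 / x ^ p - 1 / (x + c) ^ p) ≤ B * (1 / x ^ p - 1 / (x + c) ^ p) :=
      mul_le_mul_of_nonneg_right hcB hnn
    calc c / x ^ p - c / (x + c) ^ p = c * (1 / x ^ p - 1 / (x + c) ^ p) := by ring
      _ ≤ B * (1 / x ^ p - 1 / (x + c) ^ p) := this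
  linarith

lemma main_aux (b : ℕ → ℝ) (b₀ B p : ℝ) (hb₀ : 0 < b₀) (hB : 0 < B)
    (hp : 0 < p) (hp1 : p < 1) :
    ∀ n : ℕ, (∀ i, 1 ≤ i → i ≤ n → 0 < b i ∧ b i ≤ B) →
    ∑ i ∈ Icc 1 n, b i / (b₀ + ∑ j ∈ Icc 1 (i - 1), b j) ^ p
      ≤ B * (b₀ ^ (-p) - (b₀ + ∑ i ∈ Icc 1 n, b i) ^ (-p)) +
        (1 / (1 - p)) * ((b₀ + ∑ i ∈ Icc 1 n, b i) ^ (1 - p) - b₀ ^ (1 - p)) := by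
  intro n
  induction n with
  | zero => intro _; simp
  | succ n ih =>
    intro hb
    have hb' : ∀ i, 1 ≤ i → i ≤ n → 0 < b i ∧ b i ≤ B := fun i h1 h2 => hb i h1 (by omega)
    have IH := ih hb'
    have hsum : ∀ m : ℕ, m ≤ n + 1 → 0 ≤ ∑ i ∈ Icc 1 m, b i := by
      intro m hm
      exact Finset.sum_nonneg fun i hi => by
        have := mem_Icc.mp hi
        exact (hb i this.1 (by omega)).1.le
    have hSn : 0 < b₀ + ∑ i ∈ Icc 1 n, b i := by
      have := hsum n (by omega); linarith
    have hbn1 := hb (n + 1) (by omega) le_rfl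
    rw [Finset.sum_Icc_succ_top (by omega : 1 ≤ n + 1), Finset.sum_Icc_succ_top (by omega : 1 ≤ n + 1)]
    have hsimp : (n + 1) - 1 = n := rfl
    rw [hsimp]
    have hk := key (b₀ + ∑ i ∈ Icc 1 n, b i) (b (n + 1)) B p hSn hbn1.1 hbn1.2 hp hp1
    have harr : b₀ + ∑ i ∈ Icc 1 n, b i + b (n + 1) = b₀ + ((∑ i ∈ Icc 1 n, b i) + b (n + 1)) := by
      ring
    rw [harr] at hk
    linarith

theorem stmt_1 (n : ℕ) (b : ℕ → ℝ) (b₀ B p : ℝ)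
    (hb₀ : 0 < b₀) (hB : 0 < B)
    (hb : ∀ i, 1 ≤ i → i ≤ n → 0 < b i ∧ b i ≤ B)
    (hp : 0 < p) (hp1 : p < 1) :
    ∑ i ∈ Icc 1 n, b i / (b₀ + ∑ j ∈ Icc 1 (i - 1), b j) ^ p
      ≤ B / b₀ ^ p + (2 / (1 - p)) * (b₀ + ∑ i ∈ Icc 1 n, b i) ^ (1 - p) := by
  have h := main_aux b b₀ B p hb₀ hB hp hp1 n hb
  have hq : (0:ℝ) < 1 - p := by linarith
  have hsum : 0 ≤ ∑ i ∈ Icc 1 n, b i :=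
    Finset.sum_nonneg fun i hi => by
      have := mem_Icc.mp hi
      exact (hb i this.1 this.2).1.le
  have hS : 0 < b₀ + ∑ i ∈ Icc 1 n, b i := by linarith
  have h1 : b₀ ^ (-p) = 1 / b₀ ^ p := by rw [Real.rpow_neg hb₀.le, one_div]
  have h2 : 0 < (b₀ + ∑ i ∈ Icc 1 n, b i) ^ (-p) := Real.rpow_pos_of_pos hS _
  have h3 : 0 < (b₀ + ∑ i ∈ Icc 1 n, b i) ^ (1 - p) := Real.rpow_pos_of_pos hS _
  have h4 : 0 < b₀ ^ (1 - p) := Real.rpow_pos_of_pos hb₀ _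
  have h5 : 0 < b₀ ^ p := Real.rpow_pos_of_pos hb₀ _
  have hBb : B * b₀ ^ (-p) = B / b₀ ^ p := by rw [h1]; ring
  have hco : 1 / (1 - p) ≤ 2 / (1 - p) := by
    apply div_le_div_of_nonneg_right one_le_two hq.le
  nlinarith [mul_pos hB h2, mul_le_mul_of_nonneg_right hco h3.le,
    mul_pos (div_pos one_pos hq) h4]
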